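/- arXiv:2008.06483 — 7 statements merged into one kernel-verified Lean document; each statement's English description precedes it below -/
import Mathlib

section
/- For real numbers a < 0 and b > 0, the function g(x) = a·x + (b + x)·√(1 - x²) has at most one zero in the open interval (0, 1). -/
lemma key_aux (a b x y : ℝ) (ha : a < 0) (hb : 0 < b)
    (hx : x ∈ Set.Ioo (0:ℝ) 1) (hy : y ∈ Set.Ioo (0:ℝ) 1)
    (ex : a * x + (b + x) * Real.sqrt (1 - x^2) = 0)
    (ey : a * y + (b + y) * Real.sqrt (1 - y^2) = 0)
    (hxy : x < y) : False := by
  obtain ⟨hx0, hx1⟩ := hx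
  obtain ⟨hy0, hy1⟩ := hy
  have hsy : 0 < Real.sqrt (1 - y^2) := Real.sqrt_pos.2 (by nlinarith)
  have hss : Real.sqrt (1 - y^2) < Real.sqrt (1 - x^2) :=
    Real.sqrt_lt_sqrt (by nlinarith) (by nlinarith)
  nlinarith [mul_pos hy0 (mul_pos (by linarith : (0:ℝ) < b + x) (sub_pos.2 hss)),
    mul_pos hsy (mul_pos hb (sub_pos.2 hxy)),
    mul_pos hx0 hsy, mul_pos hy0 hsy]

theorem stmt_2 (a b : ℝ) (ha : a < 0) (hb : 0 < b) :
    {x ∈ Set.Ioo (0:ℝ) 1 | a * x + (b + x) * Real.sqrt (1 - x^2) = 0}.Subsingleton := by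
  rintro x ⟨hx, ex⟩ y ⟨hy, ey⟩
  rcases lt_trichotomy x y with h | h | h
  · exact absurd (key_aux a b x y ha hb hx hy ex ey h) not_false
  · exact h
  · exact absurd (key_aux a b y x ha hb hy hx ey ex h) not_false
end

section
/- For real numbers a > 0 and b < 0, the function g(x) = a·x + (b + x)·√(1 - x²) has at most one zero in the open interval (0, 1). -/
lemma key_aux_s3 (a b x y sx sy : ℝ) (ha : 0 < a) (hx : 0 < x) (hxy : x < y)
    (hsx : 0 < sx) (hsy : 0 < sy) (hle : sy ≤ sx)
    (e1 : a * x + (b + x) * sx = 0) (e2 : a * y + (b + y) * sy = 0) : False := by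
  nlinarith [mul_pos hsx hsy, mul_pos (sub_pos.mpr hxy) (mul_pos hsx hsy),
    mul_nonneg (le_of_lt (lt_trans hx hxy)) (sub_nonneg.mpr hle),
    mul_pos (sub_pos.mpr hxy) hsy]

theorem stmt_3 (a b : ℝ) (ha : 0 < a) (hb : b < 0) :
    {x ∈ Set.Ioo (0:ℝ) 1 | a * x + (b + x) * Real.sqrt (1 - x^2) = 0}.Subsingleton := by
  intro x hx y hy
  obtain ⟨⟨hx0, hx1⟩, hxe⟩ := hx
  obtain ⟨⟨hy0, hy1⟩, hye⟩ := hy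
  have hsx : 0 < Real.sqrt (1 - x^2) := Real.sqrt_pos.mpr (by nlinarith)
  have hsy : 0 < Real.sqrt (1 - y^2) := Real.sqrt_pos.mpr (by nlinarith)
  rcases lt_trichotomy x y with h | h | h
  · exact absurd (key_aux_s3 a b x y _ _ ha hx0 h hsx hsy
      (Real.sqrt_le_sqrt (by nlinarith)) hxe hye) (by simp)
  · exact h
  · exact absurd (key_aux_s3 a b y x _ _ ha hy0 h hsy hsx
      (Real.sqrt_le_sqrt (by nlinarith)) hye hxe) (by simp)
end

section
/- For any nonzero real numbers a and b, the function g₁(x) = a·x + (b + x)·√(1 - x²) has at most three zeros in the interval [-1, 1]. -/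
open Polynomial

theorem stmt_8 (a b : ℝ) (ha : a ≠ 0) (hb : b ≠ 0) :
    ∃ s : Finset ℝ, s.card ≤ 3 ∧
      ∀ x ∈ Set.Icc (-1 : ℝ) 1, a * x + (b + x) * Real.sqrt (1 - x^2) = 0 → x ∈ s := by
  set p : ℝ[X] := C (b^2) + C (2*b) * X + C (1 - a^2 - b^2) * X^2 - C (2*b) * X^3 - X^4 with hp
  have hc4 : p.coeff 4 = -1 := by
    rw [hp]
    simp only [coeff_X_pow, coeff_C, coeff_mul_X_pow', coeff_one, coeff_add, coeff_sub, ← C_pow]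
    norm_num
  have hpne : p ≠ 0 := by
    intro h
    rw [h] at hc4
    simp at hc4
  have hdeg : p.natDegree ≤ 4 := by
    rw [hp]
    compute_degree
  have heval : ∀ x : ℝ, p.eval x = (b + x)^2 * (1 - x^2) - a^2 * x^2 := by
    intro x
    simp [hp]
    ring
  -- IVT zero of g₂
  have hcont : ContinuousOn (fun x : ℝ => -a * x + (b + x) * Real.sqrt (1 - x^2))
      (Set.uIcc (-1 : ℝ) 1) := by fun_prop
  have hsub := intermediate_value_uIcc hcont
  have hfneg : (fun x : ℝ => -a * x + (b + x) * Real.sqrt (1 - x^2)) (-1) = a := by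
    norm_num
  have hfpos : (fun x : ℝ => -a * x + (b + x) * Real.sqrt (1 - x^2)) 1 = -a := by
    norm_num
  have h0mem : (0 : ℝ) ∈ Set.uIcc ((fun x : ℝ => -a * x + (b + x) * Real.sqrt (1 - x^2)) (-1))
      ((fun x : ℝ => -a * x + (b + x) * Real.sqrt (1 - x^2)) 1) := by
    rw [hfneg, hfpos, Set.mem_uIcc]
    rcases lt_or_gt_of_ne ha with h | h
    · left; constructor <;> linarith
    · right; constructor <;> linarith
  obtain ⟨x₀, hx₀mem, hx₀⟩ := hsub h0mem
  rw [Set.uIcc_of_le (by norm_num : (-1:ℝ) ≤ 1)] at hx₀mem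
  simp only at hx₀
  have hx₀sq : (1 : ℝ) - x₀^2 ≥ 0 := by
    obtain ⟨h1, h2⟩ := hx₀mem
    nlinarith
  have hkey : (b + x₀) * Real.sqrt (1 - x₀^2) = a * x₀ := by linarith
  have hx₀ne0 : x₀ ≠ 0 := by
    intro h
    rw [h] at hkey
    norm_num [Real.sqrt_one] at hkey
    exact hb hkey
  have hx₀root : p.eval x₀ = 0 := by
    rw [heval]
    have : (b + x₀)^2 * (1 - x₀^2) = ((b + x₀) * Real.sqrt (1 - x₀^2))^2 := by
      rw [mul_pow, Real.sq_sqrt hx₀sq]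
    rw [this, hkey]
    ring
  have hx₀in : x₀ ∈ p.roots.toFinset := by
    rw [Multiset.mem_toFinset, mem_roots hpne]
    exact hx₀root
  refine ⟨p.roots.toFinset.erase x₀, ?_, ?_⟩
  · have h1 : p.roots.toFinset.card ≤ 4 :=
      le_trans (Multiset.toFinset_card_le _) (le_trans p.card_roots' hdeg)
    have h2 := Finset.card_erase_of_mem hx₀in
    omega
  · intro x hx hg1
    have hxsq : (1 : ℝ) - x^2 ≥ 0 := by
      obtain ⟨h1, h2⟩ := hx
      nlinarith
    have hkey2 : (b + x) * Real.sqrt (1 - x^2) = -(a * x) := by linarith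
    have hxroot : p.eval x = 0 := by
      rw [heval]
      have : (b + x)^2 * (1 - x^2) = ((b + x) * Real.sqrt (1 - x^2))^2 := by
        rw [mul_pow, Real.sq_sqrt hxsq]
      rw [this, hkey2]
      ring
    have hxne : x ≠ x₀ := by
      intro h
      subst h
      have : a * x + a * x = 0 := by
        nlinarith [hkey, hg1]
      have : a * x = 0 := by linarith
      rcases mul_eq_zero.mp this with h | h
      · exact ha h
      · exact hx₀ne0 h
    rw [Finset.mem_erase]
    exact ⟨hxne, by rw [Multiset.mem_toFinset, mem_roots hpne]; exact hxroot⟩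
end

section
/- For all real numbers a and b, the function g(x) = a·x + (b + x)·√(1 - x²) has at most two zeros in the open interval (0, 1). -/
theorem stmt_9 (a b : ℝ) :
    ∃ s : Finset ℝ, s.card ≤ 2 ∧
      ∀ x ∈ Set.Ioo (0:ℝ) 1, a * x + (b + x) * Real.sqrt (1 - x^2) = 0 → x ∈ s := by
  by_cases ha : a = 0
  · refine ⟨{-b}, by simp, ?_⟩
    intro x hx hz
    subst ha
    have hx2 : (0:ℝ) < 1 - x^2 := by nlinarith [hx.1, hx.2]
    have hs : 0 < Real.sqrt (1 - x^2) := Real.sqrt_pos.mpr hx2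
    have : b + x = 0 := by
      rcases mul_eq_zero.mp (by linarith [hz] : (b + x) * Real.sqrt (1 - x^2) = 0) with h | h
      · exact h
      · exact absurd h (ne_of_gt hs)
    simp only [Finset.mem_singleton]
    linarith
  · set G : ℝ → ℝ := fun t => a * t / Real.sqrt (1 - t^2) + t + b with hGdef
    have hzeroG : ∀ x ∈ Set.Ioo (0:ℝ) 1,
        a * x + (b + x) * Real.sqrt (1 - x^2) = 0 → G x = 0 := by
      intro x hx hz
      have hx2 : (0:ℝ) < 1 - x^2 := by nlinarith [hx.1, hx.2]
      have hs : 0 < Real.sqrt (1 - x^2) := Real.sqrt_pos.mpr hx2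
      have hs2 : Real.sqrt (1 - x^2) ^ 2 = 1 - x^2 := Real.sq_sqrt hx2.le
      simp only [hGdef]
      field_simp
      nlinarith [hz, hs]
    have hderiv : ∀ x ∈ Set.Ioo (0:ℝ) 1,
        HasDerivAt G (a / (Real.sqrt (1 - x^2))^3 + 1) x := by
      intro x hx
      have hx2 : (0:ℝ) < 1 - x^2 := by nlinarith [hx.1, hx.2]
      have hs : 0 < Real.sqrt (1 - x^2) := Real.sqrt_pos.mpr hx2
      have hs2 : Real.sqrt (1 - x^2) ^ 2 = 1 - x^2 := Real.sq_sqrt hx2.le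
      have h1 : HasDerivAt (fun t : ℝ => 1 - t^2) (-(2*x)) x := by
        simpa using ((hasDerivAt_pow 2 x).const_sub 1)
      have h2 : HasDerivAt (fun t : ℝ => Real.sqrt (1 - t^2))
          (1 / (2 * Real.sqrt (1 - x^2)) * (-(2*x))) x :=
        (Real.hasDerivAt_sqrt (ne_of_gt hx2)).comp x h1
      have h3 : HasDerivAt (fun t : ℝ => a * t) a x := by
        simpa using (hasDerivAt_id x).const_mul a
      have h4 := (h3.div h2 (ne_of_gt hs)).add (hasDerivAt_id x)
      have h5 : HasDerivAt G _ x := h4.add_const b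
      convert h5 using 1
      have hs3 : Real.sqrt (1 - x^2) ≠ 0 := ne_of_gt hs
      field_simp
      linear_combination (-a) * hs2
    -- Rolle: between two zeros the derivative vanishes
    have rolle : ∀ x y : ℝ, x ∈ Set.Ioo (0:ℝ) 1 → y ∈ Set.Ioo (0:ℝ) 1 → x < y →
        G x = 0 → G y = 0 → ∃ c ∈ Set.Ioo x y, a / (Real.sqrt (1 - c^2))^3 + 1 = 0 := by
      intro x y hx hy hxy hGx hGy
      have hsub : Set.Icc x y ⊆ Set.Ioo (0:ℝ) 1 := fun t ht =>
        ⟨lt_of_lt_of_le hx.1 ht.1, lt_of_le_of_lt ht.2 hy.2⟩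
      have hcont : ContinuousOn G (Set.Icc x y) := fun t ht =>
        ((hderiv t (hsub ht)).continuousAt).continuousWithinAt
      have := exists_hasDerivAt_eq_zero hxy hcont (hGx.trans hGy.symm)
        (fun t ht => hderiv t (hsub ⟨ht.1.le, ht.2.le⟩))
      exact this
    -- no three distinct zeros (ordered version)
    have no3 : ∀ x y z : ℝ, x ∈ Set.Ioo (0:ℝ) 1 → y ∈ Set.Ioo (0:ℝ) 1 →
        z ∈ Set.Ioo (0:ℝ) 1 → x < y → y < z → G x = 0 → G y = 0 → G z = 0 → False := by
      intro x y z hx hy hz hxy hyz hGx hGy hGz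
      obtain ⟨c1, hc1, hd1⟩ := rolle x y hx hy hxy hGx hGy
      obtain ⟨c2, hc2, hd2⟩ := rolle y z hy hz hyz hGy hGz
      have hc1m : c1 ∈ Set.Ioo (0:ℝ) 1 := ⟨lt_trans hx.1 hc1.1, lt_trans hc1.2 hy.2⟩
      have hc2m : c2 ∈ Set.Ioo (0:ℝ) 1 := ⟨lt_trans hy.1 hc2.1, lt_trans hc2.2 hz.2⟩
      have h12 : c1 < c2 := lt_trans hc1.2 hc2.1
      have h1s : 0 < Real.sqrt (1 - c1^2) := Real.sqrt_pos.mpr (by nlinarith [hc1m.1, hc1m.2])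
      have h2s : 0 < Real.sqrt (1 - c2^2) := Real.sqrt_pos.mpr (by nlinarith [hc2m.1, hc2m.2])
      have hlt : Real.sqrt (1 - c2^2) < Real.sqrt (1 - c1^2) := by
        apply Real.sqrt_lt_sqrt (by nlinarith [hc2m.1, hc2m.2])
        nlinarith [hc1m.1, hc2m.1]
      have hp : (Real.sqrt (1 - c2^2))^3 < (Real.sqrt (1 - c1^2))^3 :=
        pow_lt_pow_left₀ hlt h2s.le (by norm_num)
      have e1 : a = -(Real.sqrt (1 - c1^2))^3 := by
        have h1s3 : (Real.sqrt (1 - c1^2))^3 ≠ 0 := by positivity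
        field_simp at hd1
        linarith
      have e2 : a = -(Real.sqrt (1 - c2^2))^3 := by
        have h2s3 : (Real.sqrt (1 - c2^2))^3 ≠ 0 := by positivity
        field_simp at hd2
        linarith
      rw [e1] at e2
      linarith
    by_cases h1 : ∃ x ∈ Set.Ioo (0:ℝ) 1, a * x + (b + x) * Real.sqrt (1 - x^2) = 0
    · obtain ⟨x1, hx1, hP1⟩ := h1
      by_cases h2 : ∃ y ∈ Set.Ioo (0:ℝ) 1,
          (a * y + (b + y) * Real.sqrt (1 - y^2) = 0) ∧ y ≠ x1
      · obtain ⟨x2, hx2, hP2, hne⟩ := h2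
        refine ⟨{x1, x2}, Finset.card_insert_le _ _ |>.trans (by simp), ?_⟩
        intro z hzm hPz
        by_contra hzs
        simp only [Finset.mem_insert, Finset.mem_singleton, not_or] at hzs
        obtain ⟨hz1, hz2⟩ := hzs
        have G1 := hzeroG x1 hx1 hP1
        have G2 := hzeroG x2 hx2 hP2
        have Gz := hzeroG z hzm hPz
        rcases lt_trichotomy x1 x2 with h12 | h12 | h12
        · rcases lt_trichotomy z x1 with hz | hz | hz
          · exact no3 z x1 x2 hzm hx1 hx2 hz h12 Gz G1 G2
          · exact hz1 hz
          · rcases lt_trichotomy z x2 with hz' | hz' | hz'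
            · exact no3 x1 z x2 hx1 hzm hx2 hz hz' G1 Gz G2
            · exact hz2 hz'
            · exact no3 x1 x2 z hx1 hx2 hzm h12 hz' G1 G2 Gz
        · exact hne h12.symm
        · rcases lt_trichotomy z x2 with hz | hz | hz
          · exact no3 z x2 x1 hzm hx2 hx1 hz h12 Gz G2 G1
          · exact hz2 hz
          · rcases lt_trichotomy z x1 with hz' | hz' | hz'
            · exact no3 x2 z x1 hx2 hzm hx1 hz hz' G2 Gz G1
            · exact hz1 hz'
            · exact no3 x2 x1 z hx2 hx1 hzm h12 hz' G2 G1 Gz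
      · refine ⟨{x1}, by simp, ?_⟩
        intro z hzm hPz
        simp only [Finset.mem_singleton]
        by_contra hne
        exact h2 ⟨z, hzm, hPz, hne⟩
    · refine ⟨∅, by simp, ?_⟩
      intro x hx hP
      exact absurd ⟨x, hx, hP⟩ h1
end

section
/- For any nonzero vector v = (v₁, v₂, v₃) in ℝ³, the function t ↦ ⟨η(t), v⟩, where η(t) = (cos t, sin t, cos² t), has at most two critical points in the open interval (0, π/2). Equivalently, the equation -v₁·sin t + v₂·cos t - 2v₃·sin t·cos t = 0 has at most two solutions t ∈ (0, π/2). -/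
open Real Set

noncomputable def phi (u : ℝ) : ℝ := u / Real.sqrt (1 + u ^ 2)

lemma sqrt_pos' (u : ℝ) : 0 < Real.sqrt (1 + u ^ 2) :=
  Real.sqrt_pos.2 (by positivity)

lemma sq_sqrt' (u : ℝ) : Real.sqrt (1 + u ^ 2) ^ 2 = 1 + u ^ 2 :=
  Real.sq_sqrt (by positivity)

lemma hasDerivAt_inner (u : ℝ) :
    HasDerivAt (fun u : ℝ => Real.sqrt (1 + u ^ 2)) (u / Real.sqrt (1 + u ^ 2)) u := by
  have h1 : HasDerivAt (fun u : ℝ => 1 + u ^ 2) (2 * u) u := by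
    simpa using (hasDerivAt_pow 2 u).const_add 1
  have := h1.sqrt (by positivity)
  convert this using 1
  have := sqrt_pos' u
  field_simp

lemma phi_hasDeriv (u : ℝ) :
    HasDerivAt phi (1 / Real.sqrt (1 + u ^ 2) ^ 3) u := by
  have hs := sqrt_pos' u
  have h := (hasDerivAt_id u).div (hasDerivAt_inner u) hs.ne'
  refine h.congr_deriv ?_
  have h2 := sq_sqrt' u
  simp only [id]
  field_simp
  nlinarith [hs, h2]

lemma deriv_phi : deriv phi = fun u => 1 / Real.sqrt (1 + u ^ 2) ^ 3 := by
  funext u; exact (phi_hasDeriv u).deriv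

lemma phi_concave : StrictConcaveOn ℝ (Set.Ici (0:ℝ)) phi := by
  apply strictConcaveOn_of_deriv2_neg (convex_Ici 0)
  · apply Continuous.continuousOn
    exact continuous_id.div (Real.continuous_sqrt.comp (by continuity))
      fun x => (sqrt_pos' x).ne'
  · intro x hx
    rw [interior_Ici] at hx
    have hs := sqrt_pos' x
    show deriv (deriv phi) x < 0
    rw [deriv_phi]
    have h3 : HasDerivAt (fun u : ℝ => Real.sqrt (1 + u ^ 2) ^ 3)
        (3 * Real.sqrt (1 + x ^ 2) ^ 2 * (x / Real.sqrt (1 + x ^ 2))) x := by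
      simpa [Pi.pow_def] using (hasDerivAt_inner x).pow 3
    have h4 := h3.inv (by positivity)
    have h5 : HasDerivAt (fun u : ℝ => 1 / Real.sqrt (1 + u ^ 2) ^ 3)
        (-(3 * Real.sqrt (1 + x ^ 2) ^ 2 * (x / Real.sqrt (1 + x ^ 2))) /
          (Real.sqrt (1 + x ^ 2) ^ 3) ^ 2) x := by
      simpa [one_div, Pi.inv_def] using h4
    rw [h5.deriv]
    have hx0 : (0:ℝ) < x := hx
    apply div_neg_of_neg_of_pos
    · have h6 : 0 < 3 * Real.sqrt (1 + x ^ 2) ^ 2 * (x / Real.sqrt (1 + x ^ 2)) := by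
        positivity
      linarith
    · positivity

lemma cond_of_deriv (v₁ v₂ v₃ t : ℝ) (ht : t ∈ Set.Ioo (0:ℝ) (Real.pi / 2))
    (h : deriv (fun t => v₁ * Real.cos t + v₂ * Real.sin t + v₃ * (Real.cos t)^2) t = 0) :
    v₂ - v₁ * Real.tan t = 2 * v₃ * phi (Real.tan t) := by
  have hc : 0 < Real.cos t := Real.cos_pos_of_mem_Ioo ⟨by linarith [ht.1, Real.pi_pos], ht.2⟩
  have hd : HasDerivAt (fun t => v₁ * Real.cos t + v₂ * Real.sin t + v₃ * (Real.cos t)^2)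
      (v₁ * (-Real.sin t) + v₂ * Real.cos t + v₃ * (2 * Real.cos t ^ 1 * (-Real.sin t))) t := by
    exact (((Real.hasDerivAt_cos t).const_mul v₁).add
      ((Real.hasDerivAt_sin t).const_mul v₂)).add
      (((Real.hasDerivAt_cos t).pow 2).const_mul v₃)
  rw [hd.deriv] at h
  have hphi : phi (Real.tan t) = Real.sin t := by
    rw [phi, Real.tan_div_sqrt_one_add_tan_sq hc]
  rw [hphi, Real.tan_eq_sin_div_cos]
  field_simp
  nlinarith [h]

lemma key_sorted (v₁ v₂ v₃ : ℝ) (hv : ¬(v₁ = 0 ∧ v₂ = 0 ∧ v₃ = 0)) {a b c : ℝ}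
    (ha : a ∈ Set.Ioo (0:ℝ) (Real.pi / 2)) (hb : b ∈ Set.Ioo (0:ℝ) (Real.pi / 2))
    (hc : c ∈ Set.Ioo (0:ℝ) (Real.pi / 2)) (hab : a < b) (hbc : b < c)
    (ea : v₂ - v₁ * Real.tan a = 2 * v₃ * phi (Real.tan a))
    (eb : v₂ - v₁ * Real.tan b = 2 * v₃ * phi (Real.tan b))
    (ec : v₂ - v₁ * Real.tan c = 2 * v₃ * phi (Real.tan c)) : False := by
  set x := Real.tan a with hxdef
  set y := Real.tan b with hydef
  set z := Real.tan c with hzdef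
  have hx : 0 < x := Real.tan_pos_of_pos_of_lt_pi_div_two ha.1 ha.2
  have hxy : x < y := Real.tan_lt_tan_of_nonneg_of_lt_pi_div_two ha.1.le hb.2 hab
  have hyz : y < z := Real.tan_lt_tan_of_nonneg_of_lt_pi_div_two hb.1.le hc.2 hbc
  have hxz : x < z := hxy.trans hyz
  set lam := (z - y) / (z - x) with hlam
  set mu := (y - x) / (z - x) with hmu
  have hzx : (0:ℝ) < z - x := by linarith
  have hlp : 0 < lam := div_pos (by linarith) hzx
  have hmp : 0 < mu := div_pos (by linarith) hzx
  have hsum : lam + mu = 1 := by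
    rw [hlam, hmu, ← add_div, div_eq_one_iff_eq hzx.ne']; ring
  have hcomb : lam * x + mu * z = y := by
    rw [hlam, hmu, div_mul_eq_mul_div, div_mul_eq_mul_div, ← add_div,
      div_eq_iff hzx.ne']; ring
  have hcombs : lam • x + mu • z = y := by simpa [smul_eq_mul] using hcomb
  have hstrict := phi_concave.2 (Set.mem_Ici.2 hx.le) (Set.mem_Ici.2 (hx.trans hxz).le)
    hxz.ne hlp hmp hsum
  rw [hcombs] at hstrict
  simp only [smul_eq_mul] at hstrict
  have haff : lam * (v₂ - v₁ * x) + mu * (v₂ - v₁ * z) = v₂ - v₁ * y := by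
    linear_combination v₂ * hsum - v₁ * hcomb
  have h3 : 2 * v₃ * (phi y - (lam * phi x + mu * phi z)) = 0 := by
    linear_combination lam * ea + mu * ec - eb - haff
  have hpos : 0 < phi y - (lam * phi x + mu * phi z) := by linarith
  have hv3 : v₃ = 0 := by
    rcases mul_eq_zero.1 h3 with h | h
    · rcases mul_eq_zero.1 h with h | h
      · norm_num at h
      · exact h
    · linarith
  rw [hv3] at ea eb
  norm_num at ea eb
  have hv1 : v₁ = 0 := by
    have h : v₁ * (y - x) = 0 := by linarith
    rcases mul_eq_zero.1 h with h | h
    · exact h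
    · linarith
  have hv2 : v₂ = 0 := by rw [hv1] at ea; linarith
  exact hv ⟨hv1, hv2, hv3⟩

lemma key (v₁ v₂ v₃ : ℝ) (hv : ¬(v₁ = 0 ∧ v₂ = 0 ∧ v₃ = 0)) {a b c : ℝ}
    (ha : a ∈ Set.Ioo (0:ℝ) (Real.pi / 2)) (hb : b ∈ Set.Ioo (0:ℝ) (Real.pi / 2))
    (hc : c ∈ Set.Ioo (0:ℝ) (Real.pi / 2)) (hab : a ≠ b) (hac : a ≠ c) (hbc : b ≠ c)
    (ea : v₂ - v₁ * Real.tan a = 2 * v₃ * phi (Real.tan a))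
    (eb : v₂ - v₁ * Real.tan b = 2 * v₃ * phi (Real.tan b))
    (ec : v₂ - v₁ * Real.tan c = 2 * v₃ * phi (Real.tan c)) : False := by
  rcases hab.lt_or_gt with h1 | h1 <;> rcases hac.lt_or_gt with h2 | h2 <;>
    rcases hbc.lt_or_gt with h3 | h3
  · exact key_sorted v₁ v₂ v₃ hv ha hb hc h1 h3 ea eb ec
  · exact key_sorted v₁ v₂ v₃ hv ha hc hb h2 h3 ea ec eb
  · linarith
  · exact key_sorted v₁ v₂ v₃ hv hc ha hb h2 h1 ec ea eb
  · exact key_sorted v₁ v₂ v₃ hv hb ha hc h1 h2 eb ea ec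
  · linarith
  · exact key_sorted v₁ v₂ v₃ hv hb hc ha h3 h2 eb ec ea
  · exact key_sorted v₁ v₂ v₃ hv hc hb ha h3 h1 ec eb ea

theorem stmt_10 (v₁ v₂ v₃ : ℝ) (hv : ¬(v₁ = 0 ∧ v₂ = 0 ∧ v₃ = 0)) :
    ∃ s : Finset ℝ, s.card ≤ 2 ∧
      ∀ t ∈ Set.Ioo (0:ℝ) (Real.pi / 2),
        deriv (fun t => v₁ * Real.cos t + v₂ * Real.sin t + v₃ * (Real.cos t)^2) t = 0 →
          t ∈ s := by
  by_cases h1 : ∃ a ∈ Set.Ioo (0:ℝ) (Real.pi / 2),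
      deriv (fun t => v₁ * Real.cos t + v₂ * Real.sin t + v₃ * (Real.cos t)^2) a = 0
  · obtain ⟨a, ha, hda⟩ := h1
    by_cases h2 : ∃ b ∈ Set.Ioo (0:ℝ) (Real.pi / 2), b ≠ a ∧
        deriv (fun t => v₁ * Real.cos t + v₂ * Real.sin t + v₃ * (Real.cos t)^2) b = 0
    · obtain ⟨b, hb, hba, hdb⟩ := h2
      refine ⟨{a, b}, ?_, ?_⟩
      · exact (Finset.card_insert_le _ _).trans (by simp)
      · intro t ht hdt
        by_cases hta : t = a
        · simp [hta]
        by_cases htb : t = b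
        · simp [htb]
        exact absurd (key v₁ v₂ v₃ hv ha hb ht (Ne.symm hba) (Ne.symm hta) (Ne.symm htb)
          (cond_of_deriv v₁ v₂ v₃ a ha hda) (cond_of_deriv v₁ v₂ v₃ b hb hdb)
          (cond_of_deriv v₁ v₂ v₃ t ht hdt)) (by simp)
    · refine ⟨{a}, by simp, ?_⟩
      intro t ht hdt
      push_neg at h2
      simp only [Finset.mem_singleton]
      by_contra h
      exact h2 t ht h hdt
  · refine ⟨∅, by simp, ?_⟩
    intro t ht hdt
    exact absurd ⟨t, ht, hdt⟩ h1
end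

section
/- Let a, b be real numbers with a < 0 and b > 0, and let h(x) = (b + x)·√(1 - x²). Then h is strictly concave on the interval (0, 1) where its second derivative exists, h(0) = b > 0, and consequently the line x ↦ |a|·x intersects the graph of h at most once for x ∈ (0, 1). -/
lemma aux_d1 (b x : ℝ) (hx : x ∈ Set.Ioo (0:ℝ) 1) :
    HasDerivAt (fun x => (b + x) * Real.sqrt (1 - x^2))
      ((1 - b*x - 2*x^2) / Real.sqrt (1 - x^2)) x := by
  have hx2 : (0:ℝ) < 1 - x^2 := by nlinarith [hx.1, hx.2]
  have hs : 0 < Real.sqrt (1 - x^2) := Real.sqrt_pos.mpr hx2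
  have hsq : Real.sqrt (1 - x^2) ^ 2 = 1 - x^2 := Real.sq_sqrt hx2.le
  have h1 : HasDerivAt (fun x : ℝ => 1 - x^2) (-(2*x)) x := by
    simpa using ((hasDerivAt_pow 2 x).const_sub 1)
  have h2 : HasDerivAt (fun x : ℝ => Real.sqrt (1 - x^2))
      (1 / (2 * Real.sqrt (1 - x^2)) * (-(2*x))) x :=
    (Real.hasDerivAt_sqrt (ne_of_gt hx2)).comp x h1
  have h3 : HasDerivAt (fun x : ℝ => b + x) 1 x := (hasDerivAt_id x).const_add b
  have := h3.mul h2
  refine this.congr_deriv (Eq.symm ?_)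
  field_simp
  nlinarith [hsq, hs]

lemma aux_d2 (b x : ℝ) (hx : x ∈ Set.Ioo (0:ℝ) 1) :
    HasDerivAt (fun x => (1 - b*x - 2*x^2) / Real.sqrt (1 - x^2))
      ((2*x^3 - 3*x - b) / Real.sqrt (1 - x^2)^3) x := by
  have hx2 : (0:ℝ) < 1 - x^2 := by nlinarith [hx.1, hx.2]
  have hs : 0 < Real.sqrt (1 - x^2) := Real.sqrt_pos.mpr hx2
  have hsq : Real.sqrt (1 - x^2) ^ 2 = 1 - x^2 := Real.sq_sqrt hx2.le
  have h1 : HasDerivAt (fun x : ℝ => 1 - x^2) (-(2*x)) x := by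
    simpa using ((hasDerivAt_pow 2 x).const_sub 1)
  have h2 : HasDerivAt (fun x : ℝ => Real.sqrt (1 - x^2))
      (1 / (2 * Real.sqrt (1 - x^2)) * (-(2*x))) x :=
    (Real.hasDerivAt_sqrt (ne_of_gt hx2)).comp x h1
  have hu : HasDerivAt (fun x : ℝ => 1 - b*x - 2*x^2) (-b - 4*x) x := by
    have h := (((hasDerivAt_const x (1:ℝ)).sub ((hasDerivAt_id x).const_mul b)).sub
      ((hasDerivAt_pow 2 x).const_mul 2))
    refine h.congr_deriv (Eq.symm ?_)
    push_cast; ring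
  have := hu.div h2 (ne_of_gt hs)
  refine this.congr_deriv (Eq.symm ?_)
  rw [show Real.sqrt (1-x^2)^3 = Real.sqrt (1-x^2)^2 * Real.sqrt (1-x^2) by ring, hsq]
  rw [div_eq_div_iff (by positivity) (by positivity)]
  field_simp
  linear_combination (b+4*x) * hsq

lemma aux_concave (b : ℝ) (hb : 0 < b) :
    StrictConcaveOn ℝ (Set.Ioo (0:ℝ) 1)
      (fun x => (b + x) * Real.sqrt (1 - x^2)) := by
  apply strictConcaveOn_of_deriv2_neg (convex_Ioo 0 1)
  · exact (continuous_const.add continuous_id).continuousOn.mul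
      ((continuous_const.sub (continuous_pow 2)).sqrt.continuousOn)
  · intro x hx
    rw [interior_Ioo] at hx
    have hx2 : (0:ℝ) < 1 - x^2 := by nlinarith [hx.1, hx.2]
    have heq : deriv (fun x => (b + x) * Real.sqrt (1 - x^2))
        =ᶠ[nhds x] (fun x => (1 - b*x - 2*x^2) / Real.sqrt (1 - x^2)) := by
      filter_upwards [isOpen_Ioo.mem_nhds hx] with y hy
      exact (aux_d1 b y hy).deriv
    have : deriv^[2] (fun x => (b + x) * Real.sqrt (1 - x^2)) x
        = (2*x^3 - 3*x - b) / Real.sqrt (1 - x^2)^3 := by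
      show deriv (deriv _) x = _
      rw [heq.deriv_eq]
      exact (aux_d2 b x hx).deriv
    rw [this]
    apply div_neg_of_neg_of_pos
    · nlinarith [hx.1, hx.2]
    · positivity

theorem stmt_12 (a b : ℝ) (ha : a < 0) (hb : 0 < b) :
    let h : ℝ → ℝ := fun x => (b + x) * Real.sqrt (1 - x^2)
    StrictConcaveOn ℝ (Set.Ioo (0:ℝ) 1) h ∧
    h 0 = b ∧ 0 < b ∧
    {x ∈ Set.Ioo (0:ℝ) 1 | |a| * x = h x}.Subsingleton := by
  intro h
  have hcc : StrictConcaveOn ℝ (Set.Ioo (0:ℝ) 1) h := aux_concave b hb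
  refine ⟨hcc, by simp [h], hb, ?_⟩
  -- Subsingleton: suppose two distinct solutions.
  have key : ∀ x1 x2 : ℝ, x1 ∈ Set.Ioo (0:ℝ) 1 → x2 ∈ Set.Ioo (0:ℝ) 1 →
      |a| * x1 = h x1 → |a| * x2 = h x2 → x1 < x2 → False := by
    intro x1 x2 hx1 hx2 he1 he2 hlt
    -- g = h - |a|·x is continuous, g 0 = b > 0, find x0 ∈ (0, x1) with g x0 > 0
    set g : ℝ → ℝ := fun x => h x - |a| * x with hg
    have hgc : Continuous g := by
      apply Continuous.sub
      · exact (continuous_const.add continuous_id).mul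
          ((continuous_const.sub (continuous_pow 2)).sqrt)
      · exact continuous_const.mul continuous_id
    have hg0 : g 0 = b := by simp [hg, h]
    have hev : ∀ᶠ y in nhds (0:ℝ), 0 < g y := by
      have : ContinuousAt g 0 := hgc.continuousAt
      have := this.eventually_mem (isOpen_Ioi.mem_nhds (by rw [hg0]; exact hb))
      simpa [Set.mem_Ioi] using this
    haveI hne : (nhdsWithin (0:ℝ) (Set.Ioo 0 x1)).NeBot := by
      rw [← mem_closure_iff_nhdsWithin_neBot, closure_Ioo (ne_of_lt hx1.1)]
      exact ⟨le_refl 0, hx1.1.le⟩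
    obtain ⟨x0, hgx0, hx0⟩ := ((hev.filter_mono
      (nhdsWithin_le_nhds (s := Set.Ioo 0 x1))).and self_mem_nhdsWithin).exists
    -- strict concavity at x1 between x0 and x2
    have hx0' : x0 ∈ Set.Ioo (0:ℝ) 1 := ⟨hx0.1, lt_trans hx0.2 (lt_trans hlt hx2.2)⟩
    set t : ℝ := (x2 - x1) / (x2 - x0) with ht
    have hd : 0 < x2 - x0 := by linarith [hx0.2]
    have ht0 : 0 < t := div_pos (by linarith) hd
    have ht1 : 0 < 1 - t := by
      rw [ht]; rw [sub_pos, div_lt_one hd]; linarith [hx0.2]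
    have hsum : t + (1 - t) = 1 := by ring
    have hcomb : t * x0 + (1 - t) * x2 = x1 := by
      rw [ht]; field_simp; ring
    have := hcc.2 hx0' hx2 (ne_of_lt (lt_trans hx0.2 hlt)) ht0 ht1 hsum
    rw [smul_eq_mul, smul_eq_mul, smul_eq_mul, smul_eq_mul, hcomb] at this
    -- h x1 = |a| x1, h x2 = |a| x2, conclude |a| x0 > h x0 contradiction with g x0 > 0
    have : t * h x0 + (1 - t) * (|a| * x2) < |a| * x1 := by
      rw [he1, he2] at *; linarith
    have hline : |a| * x1 = t * (|a| * x0) + (1 - t) * (|a| * x2) := by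
      rw [← hcomb]; ring
    have : t * h x0 < t * (|a| * x0) := by linarith [hline ▸ this]
    have : h x0 < |a| * x0 := lt_of_mul_lt_mul_left this ht0.le
    have : g x0 < 0 := by simp [hg]; linarith
    linarith [hgx0]
  intro x hx y hy
  simp only [Set.mem_setOf_eq] at hx hy
  by_contra hne
  rcases lt_or_gt_of_ne hne with hlt | hlt
  · exact absurd (key x y hx.1 hy.1 hx.2 hy.2 hlt) not_false
  · exact absurd (key y x hy.1 hx.1 hy.2 hx.2 hlt) not_false
end

section
/- The curve η(t) = (cos t, sin t, cos² t), t ∈ [0, 2π), has the property that for every unit vector v ∈ ℝ³, the function t ↦ ⟨η(t), v⟩ has at most two local maxima on the circle ℝ/2πℤ. -/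
open Polynomial Complex

noncomputable def pp (v₁ v₂ v₃ : ℝ) : Polynomial ℂ :=
  C (-v₃ : ℂ) * X^4 + C (-(v₁:ℂ) + v₂ * I) * X^3 + C ((v₁:ℂ) + v₂ * I) * X + C (v₃ : ℂ)

lemma pp_ne_zero (v₁ v₂ v₃ : ℝ) (hv : v₁^2 + v₂^2 + v₃^2 = 1) : pp v₁ v₂ v₃ ≠ 0 := by
  intro h
  have e0 := congrArg (eval (0:ℂ)) h
  have e1 := congrArg (eval (1:ℂ)) h
  have eI := congrArg (eval I) h
  simp [pp] at e0 e1 eI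
  have h2 : (v₂:ℂ) * I = 0 := by linear_combination e1 / 2
  have h1 : (v₁:ℂ) * I = 0 := by
    have hI : (I:ℂ)^2 = -1 := Complex.I_sq
    linear_combination eI / 2
  have hv2 : v₂ = 0 := by
    simpa using (mul_eq_zero.mp h2).resolve_right Complex.I_ne_zero
  have hv1 : v₁ = 0 := by
    simpa using (mul_eq_zero.mp h1).resolve_right Complex.I_ne_zero
  rw [hv1, hv2, e0] at hv; norm_num at hv

lemma pp_natDegree_le (v₁ v₂ v₃ : ℝ) : (pp v₁ v₂ v₃).natDegree ≤ 4 := by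
  unfold pp
  compute_degree

lemma pp_root (v₁ v₂ v₃ t : ℝ)
    (hg : -v₁ * Real.sin t + v₂ * Real.cos t - 2 * v₃ * (Real.cos t * Real.sin t) = 0) :
    (pp v₁ v₂ v₃).IsRoot (Complex.exp (t * I)) := by
  have hz : Complex.exp (t * I) = Complex.cos t + Complex.sin t * I := Complex.exp_mul_I t
  have hpy : (Complex.cos t)^2 + (Complex.sin t)^2 = 1 := Complex.cos_sq_add_sin_sq t
  have hgc : -(v₁:ℂ) * Complex.sin t + v₂ * Complex.cos t
      - 2 * v₃ * (Complex.cos t * Complex.sin t) = 0 := by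
    have := congrArg (Complex.ofReal) hg
    push_cast at this
    rw [← Complex.ofReal_sin, ← Complex.ofReal_cos] at this ⊢
    exact_mod_cast hg
  have hI : (I:ℂ)^2 = -1 := Complex.I_sq
  simp only [IsRoot, pp, eval_add, eval_mul, eval_pow, eval_C, eval_X, hz]
  set c := Complex.cos t
  set s := Complex.sin t
  linear_combination ((-(v₃:ℂ)*(c^2+s^2+1) - v₁*c + v₂*s) + (-(v₂:ℂ)*c - v₁*s)*I) * hpy
    + (2*I*(c+s*I)^2) * hgc
    + (2*v₃*c^2*s^2 + v₃*s^4*(1-I^2) + v₂*c*s^2*I + v₁*c*s^2 - v₂*c^2*s + v₂*s + v₁*s^3*I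
        + v₂*s^3*(I^2-1)) * hI

lemma exp_injOn : Set.InjOn (fun t : ℝ => Complex.exp (t * I)) (Set.Ico 0 (2 * Real.pi)) := by
  intro a ha b hb hab
  obtain ⟨n, hn⟩ := Complex.exp_eq_exp_iff_exists_int.mp hab
  have him : a = b + n * (2 * Real.pi) := by
    have := congrArg Complex.im hn
    push_cast at this
    simpa using this
  have hpi := Real.pi_pos
  have hn0 : n = 0 := by
    rcases lt_trichotomy n 0 with h | h | h
    · have : (n:ℝ) ≤ -1 := by exact_mod_cast (by omega : n ≤ -1)
      nlinarith [ha.1, ha.2, hb.1, hb.2]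
    · exact h
    · have : (1:ℝ) ≤ n := by exact_mod_cast h
      nlinarith [ha.1, ha.2, hb.1, hb.2]
  rw [hn0] at him; simpa using him

theorem stmt_17 (v₁ v₂ v₃ : ℝ) (hv : v₁^2 + v₂^2 + v₃^2 = 1) :
    ∃ s : Finset ℝ, s.card ≤ 2 ∧
      ∀ t ∈ Set.Ico (0:ℝ) (2 * Real.pi),
        IsLocalMax (fun t => v₁ * Real.cos t + v₂ * Real.sin t + v₃ * (Real.cos t)^2) t →
          t ∈ s := by
  classical
  set f : ℝ → ℝ := fun t => v₁ * Real.cos t + v₂ * Real.sin t + v₃ * (Real.cos t)^2 with hf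
  set g : ℝ → ℝ := fun t =>
    -v₁ * Real.sin t + v₂ * Real.cos t - 2 * v₃ * (Real.cos t * Real.sin t) with hgdef
  have hd : ∀ t, HasDerivAt f (g t) t := by
    intro t
    have h1 := (Real.hasDerivAt_cos t).const_mul v₁
    have h2 := (Real.hasDerivAt_sin t).const_mul v₂
    have h3 := ((Real.hasDerivAt_cos t).pow 2).const_mul v₃
    exact ((h1.add h2).add h3).congr_deriv (by simp only [hgdef]; norm_num; ring)
  have hfc : Continuous f := by
    rw [continuous_iff_continuousAt]; exact fun t => (hd t).continuousAt
  set Z : Set ℝ := {t | t ∈ Set.Ico (0:ℝ) (2 * Real.pi) ∧ g t = 0} with hZdef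
  -- Z is finite with at most 4 elements
  have hmap : ∀ t ∈ Z, Complex.exp (t * I) ∈ ((pp v₁ v₂ v₃).roots.toFinset : Set ℂ) := by
    intro t ht
    simp only [Finset.coe_sort_coe, Multiset.mem_toFinset, Finset.mem_coe,
      mem_roots (pp_ne_zero v₁ v₂ v₃ hv)]
    exact pp_root v₁ v₂ v₃ t ht.2
  have hinj : Set.InjOn (fun t : ℝ => Complex.exp (t * I)) Z :=
    exp_injOn.mono (fun t ht => ht.1)
  have hZfin : Z.Finite := by
    apply Set.Finite.of_finite_image _ hinj
    exact Set.Finite.subset ((pp v₁ v₂ v₃).roots.toFinset.finite_toSet)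
      (Set.image_subset_iff.mpr hmap)
  have hZ4 : Z.ncard ≤ 4 := by
    have h1 : Z.ncard = ((fun t : ℝ => Complex.exp (t * I)) '' Z).ncard :=
      (Set.ncard_image_of_injOn hinj).symm
    have h2 : ((fun t : ℝ => Complex.exp (t * I)) '' Z).ncard
        ≤ (((pp v₁ v₂ v₃).roots.toFinset : Set ℂ)).ncard :=
      Set.ncard_le_ncard (Set.image_subset_iff.mpr hmap)
        ((pp v₁ v₂ v₃).roots.toFinset.finite_toSet)
    rw [Set.ncard_coe_finset] at h2
    have h3 : (pp v₁ v₂ v₃).roots.toFinset.card ≤ (pp v₁ v₂ v₃).roots.card :=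
      Multiset.toFinset_card_le _
    have h4 : (pp v₁ v₂ v₃).roots.card ≤ (pp v₁ v₂ v₃).natDegree :=
      (pp v₁ v₂ v₃).card_roots'
    have h5 := pp_natDegree_le v₁ v₂ v₃
    omega
  -- f is not locally constant: constancy on an open subinterval of [0,2π) is impossible
  have hconst : ∀ (u w k : ℝ), 0 ≤ u → w ≤ 2 * Real.pi → u < w →
      (∀ x ∈ Set.Ioo u w, f x = k) → False := by
    intro u w k hu hw huw hcst
    have hsub : Set.Ioo u w ⊆ Z := by
      intro x hx
      have hmem : x ∈ Set.Ico (0:ℝ) (2 * Real.pi) :=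
        ⟨le_of_lt (lt_of_le_of_lt hu hx.1), lt_of_lt_of_le hx.2 hw⟩
      refine ⟨hmem, ?_⟩
      have hEq : f =ᶠ[nhds x] fun _ => k := by
        filter_upwards [Ioo_mem_nhds hx.1 hx.2] with y hy using hcst y hy
      have h0 : HasDerivAt (fun _ : ℝ => k) (g x) x := (hd x).congr_of_eventuallyEq hEq.symm
      have h1 : HasDerivAt (fun _ : ℝ => k) 0 x := hasDerivAt_const x k
      exact h0.unique h1
    exact (Set.Ioo_infinite huw) (hZfin.subset hsub)
  -- between two local maxima there is a critical point
  have hbetween : ∀ x y : ℝ, x ∈ Set.Ico (0:ℝ) (2 * Real.pi) → y ∈ Set.Ico (0:ℝ) (2 * Real.pi) →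
      x < y → IsLocalMax f x → IsLocalMax f y → ∃ m, x < m ∧ m < y ∧ m ∈ Z := by
    intro x y hx hy hxy hmx hmy
    obtain ⟨m, hmI, hmin⟩ := isCompact_Icc.exists_isMinOn (Set.nonempty_Icc.mpr hxy.le)
      hfc.continuousOn
    rcases eq_or_lt_of_le hmI.1 with hmx' | hlt
    · -- m = x : f is constant just right of x
      exfalso
      obtain ⟨ε, hε, hball⟩ := Metric.eventually_nhds_iff.mp hmx
      set w := min (x + ε) y with hwdef
      have hxw : x < w := lt_min (by linarith) hxy
      refine hconst x w (f x) hx.1 (le_trans (min_le_right _ _) hy.2.le) hxw ?_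
      intro z hz
      have hzIcc : z ∈ Set.Icc x y := ⟨hz.1.le, le_trans hz.2.le (min_le_right _ _)⟩
      have h1 : f x ≤ f z := by rw [← hmx'] at hmin; exact hmin hzIcc
      have h2 : f z ≤ f x := by
        apply hball
        rw [Real.dist_eq, abs_of_pos (by linarith [hz.1])]
        have := hz.2
        have := min_le_left (x + ε) y
        linarith [lt_of_lt_of_le hz.2 (min_le_left (x + ε) y)]
      linarith
    rcases eq_or_lt_of_le hmI.2 with hmy' | hlt2
    · -- m = y : f is constant just left of y
      exfalso
      obtain ⟨ε, hε, hball⟩ := Metric.eventually_nhds_iff.mp hmy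
      set u := max (y - ε) x with hudef
      have huy : u < y := max_lt (by linarith) hxy
      have hkey : ∀ z ∈ Set.Ioo u y, f z = f y := by
        intro z hz
        have hzIcc : z ∈ Set.Icc x y := ⟨le_trans (le_max_right _ _) hz.1.le, hz.2.le⟩
        have h1 : f y ≤ f z := by rw [hmy'] at hmin; exact hmin hzIcc
        have h2 : f z ≤ f y := by
          apply hball
          rw [Real.dist_eq, abs_of_neg (by linarith [hz.2])]
          have := lt_of_le_of_lt (le_max_left (y - ε) x) hz.1
          linarith
        linarith
      exact hconst u y (f y) (le_trans hx.1 (le_max_right _ _)) hy.2.le huy hkey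
    · -- interior minimum
      have hlm : IsLocalMin f m := hmin.isLocalMin (Icc_mem_nhds hlt hlt2)
      refine ⟨m, hlt, hlt2, ⟨⟨le_trans hx.1 hmI.1, lt_of_le_of_lt hmI.2 hy.2⟩, ?_⟩⟩
      exact hlm.hasDerivAt_eq_zero (hd m)
  -- the set of local maxima
  set S : Set ℝ := {t | t ∈ Set.Ico (0:ℝ) (2 * Real.pi) ∧ IsLocalMax f t} with hSdef
  have hSZ : S ⊆ Z := fun t ht => ⟨ht.1, ht.2.hasDerivAt_eq_zero (hd t)⟩
  have hSfin : S.Finite := hZfin.subset hSZ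
  refine ⟨hSfin.toFinset, ?_, ?_⟩
  · by_contra hc
    push_neg at hc
    set F := hSfin.toFinset with hF
    have h3 : 3 ≤ F.card := hc
    have hne : F.Nonempty := Finset.card_pos.mp (by omega)
    set a := F.min' hne with ha
    have haF : a ∈ F := F.min'_mem hne
    set F1 := F.erase a with hF1
    have h2' : 2 ≤ F1.card := by
      have hce : F1.card = F.card - 1 := by rw [hF1]; exact F.card_erase_of_mem haF
      omega
    have hne1 : F1.Nonempty := Finset.card_pos.mp (by omega)
    set b := F1.min' hne1 with hb
    have hbF1 : b ∈ F1 := F1.min'_mem hne1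
    have hbF : b ∈ F := Finset.mem_of_mem_erase hbF1
    set F2 := F1.erase b with hF2
    have h1' : 1 ≤ F2.card := by
      have hce : F2.card = F1.card - 1 := by rw [hF2]; exact F1.card_erase_of_mem hbF1
      omega
    have hne2 : F2.Nonempty := Finset.card_pos.mp (by omega)
    obtain ⟨c, hcF2⟩ := hne2
    have hcF1 : c ∈ F1 := Finset.mem_of_mem_erase hcF2
    have hcF : c ∈ F := Finset.mem_of_mem_erase hcF1
    have hab : a < b :=
      lt_of_le_of_ne (F.min'_le b hbF) (Ne.symm (Finset.ne_of_mem_erase hbF1))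
    have hbc : b < c :=
      lt_of_le_of_ne (F1.min'_le c hcF1) (Ne.symm (Finset.ne_of_mem_erase hcF2))
    have haS : a ∈ S := hSfin.mem_toFinset.mp haF
    have hbS : b ∈ S := hSfin.mem_toFinset.mp hbF
    have hcS : c ∈ S := hSfin.mem_toFinset.mp hcF
    obtain ⟨m₁, ham₁, hm₁b, hm₁Z⟩ := hbetween a b haS.1 hbS.1 hab haS.2 hbS.2
    obtain ⟨m₂, hbm₂, hm₂c, hm₂Z⟩ := hbetween b c hbS.1 hcS.1 hbc hbS.2 hcS.2
    -- five distinct points in Z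
    have hsub5 : ({a, m₁, b, m₂, c} : Finset ℝ) ⊆ hZfin.toFinset := by
      intro x hx
      simp only [Finset.mem_insert, Finset.mem_singleton] at hx
      rw [Set.Finite.mem_toFinset]
      rcases hx with rfl | rfl | rfl | rfl | rfl
      · exact hSZ haS
      · exact hm₁Z
      · exact hSZ hbS
      · exact hm₂Z
      · exact hSZ hcS
    have hcard5 : ({a, m₁, b, m₂, c} : Finset ℝ).card = 5 := by
      rw [Finset.card_insert_of_notMem, Finset.card_insert_of_notMem,
        Finset.card_insert_of_notMem, Finset.card_insert_of_notMem,
        Finset.card_singleton]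
      · simp only [Finset.mem_singleton]; intro h; linarith
      · simp only [Finset.mem_insert, Finset.mem_singleton]
        rintro (h | h) <;> linarith
      · simp only [Finset.mem_insert, Finset.mem_singleton]
        rintro (h | h | h) <;> linarith
      · simp only [Finset.mem_insert, Finset.mem_singleton]
        rintro (h | h | h | h) <;> linarith
    have h5 : 5 ≤ hZfin.toFinset.card := by
      rw [← hcard5]
      exact Finset.card_le_card hsub5
    rw [← Set.ncard_eq_toFinset_card Z hZfin] at h5
    omega
  · intro t ht hmax
    exact hSfin.mem_toFinset.mpr ⟨ht, hmax⟩
end
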